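/- Under the worst case of SRRD canonicalization where the non-forward transition terms retain only their forward subsets (p, q → 0 leaving six reward terms), the effective residual shaping of Ĉ_SRRD applied to R' = R + γφ(s') − φ(s) is E[γ³φ(S₅) − γ²φ(S₆)] (up to an additive constant), whose absolute value is at most 2M; since this Ĉ_SRRD has six reward terms with upper bound 6Z, the relative shaping error satisfies RSE(Ĉ_SRRD(R)) ≤ M/(3Z). -/
import Mathlib


/-- Worst-case SRRD canonicalization (the non-forward transition terms retain
only their forward subsets, leaving six reward terms): the effective residual
shaping of `Ĉ_SRRD` applied to `R' = R + γφ(s') − φ(s)` is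
`E[γ³φ(S₅) − γ²φ(S₆)]` up to an additive constant, its absolute value is at
most `2M`, and the relative shaping error (with `n = 6` reward terms) is at
most `M / (3Z)`. Here `S₁, S₂, S₅, S₆` may depend on the transition while
`S₃, S₄` do not. -/
theorem stmt19 {St Ac Ω : Type*} [Fintype Ω]
    (R : St → Ac → St → ℝ) (φ : St → ℝ) (γ : ℝ) (hγ0 : 0 ≤ γ) (hγ1 : γ ≤ 1)
    (p : Ω → ℝ) (hp0 : ∀ ω, 0 ≤ p ω) (hp1 : ∑ ω, p ω = 1)
    (Av : Ω → Ac) (S3 S4 : Ω → St)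
    (S1 S2 S5 S6 : St → Ac → St → Ω → St)
    (M Z : ℝ) (hM : ∀ s, |φ s| ≤ M) (hM0 : 0 ≤ M) (hZ : 0 < Z) :
    let Chat := fun (Q : St → Ac → St → ℝ) (s : St) (a : Ac) (s' : St) =>
      Q s a s' + ∑ ω, p ω *
        (γ * Q s' (Av ω) (S1 s a s' ω) - Q s (Av ω) (S2 s a s' ω)
         - γ * Q (S3 ω) (Av ω) (S4 ω)
         + γ ^ 2 * Q (S1 s a s' ω) (Av ω) (S5 s a s' ω)
         - γ * Q (S2 s a s' ω) (Av ω) (S6 s a s' ω))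
    let R' := fun (s : St) (a : Ac) (s' : St) => R s a s' + γ * φ s' - φ s
    let eff := fun (s : St) (a : Ac) (s' : St) =>
      ∑ ω, p ω * (γ ^ 3 * φ (S5 s a s' ω) - γ ^ 2 * φ (S6 s a s' ω))
    (∃ K : ℝ, ∀ s a s', Chat R' s a s' = Chat R s a s' + eff s a s' + K) ∧
    (∀ s a s', |eff s a s'| ≤ 2 * M) ∧
    (∀ s a s', |eff s a s'| / (6 * Z) ≤ M / (3 * Z)) := by
  intro Chat R' eff
  have habs : ∀ s a s', |eff s a s'| ≤ 2 * M := by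
    intro s a s'
    simp only [eff]
    calc |∑ ω, p ω * (γ ^ 3 * φ (S5 s a s' ω) - γ ^ 2 * φ (S6 s a s' ω))|
        ≤ ∑ ω, |p ω * (γ ^ 3 * φ (S5 s a s' ω) - γ ^ 2 * φ (S6 s a s' ω))| :=
          Finset.abs_sum_le_sum_abs _ _
      _ ≤ ∑ ω, p ω * (2 * M) := by
          refine Finset.sum_le_sum fun ω _ => ?_
          rw [abs_mul, abs_of_nonneg (hp0 ω)]
          refine mul_le_mul_of_nonneg_left ?_ (hp0 ω)
          have h3 : γ ^ 3 ≤ 1 := pow_le_one₀ hγ0 hγ1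
          have h2 : γ ^ 2 ≤ 1 := pow_le_one₀ hγ0 hγ1
          have h30 : 0 ≤ γ ^ 3 := pow_nonneg hγ0 3
          have h20 : 0 ≤ γ ^ 2 := pow_nonneg hγ0 2
          calc |γ ^ 3 * φ (S5 s a s' ω) - γ ^ 2 * φ (S6 s a s' ω)|
              ≤ |γ ^ 3 * φ (S5 s a s' ω)| + |γ ^ 2 * φ (S6 s a s' ω)| := abs_sub _ _
            _ ≤ 1 * M + 1 * M := by
                gcongr
                · rw [abs_mul, abs_of_nonneg h30]
                  exact mul_le_mul h3 (hM _) (abs_nonneg _) one_pos.le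
                · rw [abs_mul, abs_of_nonneg h20]
                  exact mul_le_mul h2 (hM _) (abs_nonneg _) one_pos.le
            _ = 2 * M := by ring
      _ = 2 * M := by rw [← Finset.sum_mul, hp1, one_mul]
  refine ⟨⟨∑ ω, p ω * (γ * φ (S3 ω) - γ ^ 2 * φ (S4 ω)), fun s a s' => ?_⟩,
    habs, fun s a s' => ?_⟩
  · simp only [Chat, R', eff]
    have hsplit : ∀ ω ∈ (Finset.univ : Finset Ω),
        p ω * (γ * (R s' (Av ω) (S1 s a s' ω) + γ * φ (S1 s a s' ω) - φ s')
          - (R s (Av ω) (S2 s a s' ω) + γ * φ (S2 s a s' ω) - φ s)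
          - γ * (R (S3 ω) (Av ω) (S4 ω) + γ * φ (S4 ω) - φ (S3 ω))
          + γ ^ 2 * (R (S1 s a s' ω) (Av ω) (S5 s a s' ω)
              + γ * φ (S5 s a s' ω) - φ (S1 s a s' ω))
          - γ * (R (S2 s a s' ω) (Av ω) (S6 s a s' ω)
              + γ * φ (S6 s a s' ω) - φ (S2 s a s' ω)))
        = p ω * (γ * R s' (Av ω) (S1 s a s' ω) - R s (Av ω) (S2 s a s' ω)
            - γ * R (S3 ω) (Av ω) (S4 ω)
            + γ ^ 2 * R (S1 s a s' ω) (Av ω) (S5 s a s' ω)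
            - γ * R (S2 s a s' ω) (Av ω) (S6 s a s' ω))
          + p ω * (γ ^ 3 * φ (S5 s a s' ω) - γ ^ 2 * φ (S6 s a s' ω))
          + p ω * (γ * φ (S3 ω) - γ ^ 2 * φ (S4 ω))
          + p ω * (φ s - γ * φ s') := fun ω _ => by ring
    rw [Finset.sum_congr rfl hsplit, Finset.sum_add_distrib, Finset.sum_add_distrib,
      Finset.sum_add_distrib, ← Finset.sum_mul, hp1, one_mul]
    ring
  · have h := habs s a s'
    have h6 : (0:ℝ) < 6 * Z := by linarith
    calc |eff s a s'| / (6 * Z) ≤ 2 * M / (6 * Z) := by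
          exact div_le_div_of_nonneg_right h h6.le |>.trans_eq rfl
      _ = M / (3 * Z) := by field_simp; ring
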